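/- Let r > 0 and let μ_r denote the uniform (rotation-invariant, normalized surface) probability measure on the sphere {y ∈ ℝ³ : ‖y‖ = r}. Then for every x ∈ ℝ³ with x ≠ 0, ∫ exp(−2πi ⟨x, y⟩) dμ_r(y) = sin(2π r ‖x‖) / (2π r ‖x‖). -/

import Mathlib

open MeasureTheory Filter Metric Set
open scoped Topology

namespace SFP

noncomputable section

local notation "E" => EuclideanSpace ℝ (Fin 3)

def ee (a : ℝ) : ℂ := Complex.exp (-(2 * Real.pi * Complex.I * a))

lemma continuous_ee : Continuous ee := by unfold ee; fun_prop

lemma norm_ee (a : ℝ) : ‖ee a‖ = 1 := by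
  have : (-(2 * Real.pi * Complex.I * a)) = ((-(2 * Real.pi * a) : ℝ) : ℂ) * Complex.I := by
    push_cast; ring
  rw [ee, this, Complex.norm_exp_ofReal_mul_I]

lemma vol_disk (a : ℝ) :
    volume {v : Fin 2 → ℝ | ∑ j, v j ^ 2 < a} = ENNReal.ofReal (Real.pi * a) := by
  rcases le_or_gt a 0 with ha | ha
  · have h0 : {v : Fin 2 → ℝ | ∑ j, v j ^ 2 < a} = ∅ := by
      ext v
      simp only [mem_setOf_eq, mem_empty_iff_false, iff_false, not_lt]
      exact le_trans ha (by positivity)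
    rw [h0, measure_empty, eq_comm, ENNReal.ofReal_eq_zero]
    nlinarith [Real.pi_pos]
  · have key := (EuclideanSpace.volume_preserving_symm_measurableEquiv_toLp (Fin 2)).measure_preimage_emb
      (MeasurableEquiv.measurableEmbedding _) {v : Fin 2 → ℝ | ∑ j, v j ^ 2 < a}
    have hpre : (MeasurableEquiv.toLp 2 (Fin 2 → ℝ)).symm ⁻¹' {v : Fin 2 → ℝ | ∑ j, v j ^ 2 < a}
        = ball (0 : EuclideanSpace ℝ (Fin 2)) (Real.sqrt a) := by
      ext u
      have hnorm : ‖u‖ = Real.sqrt (∑ j, u j ^ 2) := by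
        rw [EuclideanSpace.norm_eq]
        congr 1
        exact Finset.sum_congr rfl fun j _ => by rw [Real.norm_eq_abs, sq_abs]
      have hmem : (MeasurableEquiv.toLp 2 (Fin 2 → ℝ)).symm u ∈
          {v : Fin 2 → ℝ | ∑ j, v j ^ 2 < a} ↔ (∑ j, u j ^ 2) < a := Iff.rfl
      simp only [mem_preimage, hmem, mem_ball, dist_zero_right, hnorm]
      exact (Real.sqrt_lt_sqrt_iff (by positivity : (0:ℝ) ≤ ∑ j, u j ^ 2)).symm
    rw [hpre] at key
    rw [← key, EuclideanSpace.volume_ball]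
    have hcard : Fintype.card (Fin 2) = 2 := by simp
    rw [hcard]
    have hg : Real.Gamma ((2 : ℕ) / 2 + 1) = 1 := by
      norm_num [Real.Gamma_two]
    rw [hg]
    rw [← ENNReal.ofReal_pow (Real.sqrt_nonneg a), Real.sq_sqrt ha.le,
      ← ENNReal.ofReal_mul ha.le]
    congr 1
    rw [Real.sq_sqrt Real.pi_pos.le]
    ring

def Phi : EuclideanSpace ℝ (Fin 3) ≃ᵐ (ℝ × (Fin 2 → ℝ)) :=
  (MeasurableEquiv.toLp 2 (Fin 3 → ℝ)).symm.trans (MeasurableEquiv.piFinSuccAbove (fun _ => ℝ) 0)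

lemma Phi_mp : MeasurePreserving Phi volume volume :=
  (EuclideanSpace.volume_preserving_symm_measurableEquiv_toLp (Fin 3)).trans
    (volume_preserving_piFinSuccAbove (fun _ => ℝ) 0)

lemma Phi_fst (u : E) : (Phi u).1 = u 0 := rfl

lemma Phi_sum (u : E) : (Phi u).1 ^ 2 + ∑ j, ((Phi u).2 j) ^ 2 = ∑ i, u i ^ 2 := by
  have h2 : ∀ j : Fin 2, (Phi u).2 j = u j.succ := by
    intro j
    show u ((0 : Fin 3).succAbove j) = u j.succ
    rw [Fin.zero_succAbove]
  rw [Phi_fst]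
  simp only [h2]
  rw [Fin.sum_univ_three, Fin.sum_univ_two, Fin.succ_zero_eq_one, Fin.succ_one_eq_two]
  ring

def Sset (R : ℝ) : Set (ℝ × (Fin 2 → ℝ)) := {p | p.1 ^ 2 + ∑ j, (p.2 j) ^ 2 < R ^ 2}

lemma Sset_meas (R : ℝ) : MeasurableSet (Sset R) := by
  apply measurableSet_lt _ measurable_const
  fun_prop

lemma Phi_pre {R : ℝ} (hR : 0 < R) : Phi ⁻¹' (Sset R) = ball (0 : E) R := by
  ext u
  have hnorm : ‖u‖ = Real.sqrt (∑ i, u i ^ 2) := by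
    rw [EuclideanSpace.norm_eq]
    congr 1
    exact Finset.sum_congr rfl fun j _ => by rw [Real.norm_eq_abs, sq_abs]
  simp only [mem_preimage, Sset, mem_setOf_eq, Phi_sum, mem_ball, dist_zero_right, hnorm]
  exact (Real.sqrt_lt' hR).symm

lemma cartesian (c R : ℝ) (hR : 0 < R) :
    ∫ u, Set.indicator (ball (0:E) R) (fun u => ee (c * u 0)) u ∂(volume : Measure E)
      = ∫ w in (-R)..R, (((Real.pi * (R^2 - w^2) : ℝ)) : ℂ) * ee (c * w) := by
  have hS := Sset_meas R
  -- transfer to ℝ × (Fin 2 → ℝ)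
  have step1 : ∫ u, Set.indicator (ball (0:E) R) (fun u => ee (c * u 0)) u ∂(volume : Measure E)
      = ∫ p, Set.indicator (Sset R) (fun p => ee (c * p.1)) p
          ∂(volume : Measure (ℝ × (Fin 2 → ℝ))) := by
    rw [← Phi_mp.integral_comp Phi.measurableEmbedding
      (Set.indicator (Sset R) (fun p => ee (c * p.1)))]
    apply integral_congr_ae
    filter_upwards with u
    by_cases hu : Phi u ∈ Sset R
    · have hu' : u ∈ ball (0:E) R := by rw [← Phi_pre hR]; exact hu
      rw [Set.indicator_of_mem hu, Set.indicator_of_mem hu', Phi_fst]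
    · have hu' : u ∉ ball (0:E) R := by rw [← Phi_pre hR]; exact hu
      rw [Set.indicator_of_notMem hu, Set.indicator_of_notMem hu']
  rw [step1]
  -- integrability
  have hSvol : volume (Sset R) < ⊤ := by
    rw [← Phi_mp.measure_preimage_emb Phi.measurableEmbedding, Phi_pre hR]
    exact measure_ball_lt_top
  have hint : Integrable (Set.indicator (Sset R) (fun p => ee (c * p.1)))
      (volume : Measure (ℝ × (Fin 2 → ℝ))) := by
    rw [integrable_indicator_iff hS]
    apply Measure.integrableOn_of_bounded hSvol.ne
    · exact (continuous_ee.comp (by fun_prop)).aestronglyMeasurable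
    · filter_upwards with p
      rw [norm_ee]
  -- Fubini
  rw [MeasureTheory.Measure.volume_eq_prod] at hint ⊢
  rw [MeasureTheory.integral_prod _ hint]
  -- inner integral
  have inner_eq : ∀ w : ℝ,
      (∫ v : Fin 2 → ℝ, Set.indicator (Sset R) (fun p => ee (c * p.1)) (w, v))
      = Set.indicator (Ioo (-R) R)
          (fun w => (((Real.pi * (R^2 - w^2) : ℝ)) : ℂ) * ee (c * w)) w := by
    intro w
    have hrw : (fun v : Fin 2 → ℝ => Set.indicator (Sset R) (fun p => ee (c * p.1)) (w, v))
        = Set.indicator {v : Fin 2 → ℝ | ∑ j, v j ^ 2 < R ^ 2 - w ^ 2}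
            (fun _ => ee (c * w)) := by
      funext v
      by_cases hv : (w, v) ∈ Sset R
      · have hv' : v ∈ {v : Fin 2 → ℝ | ∑ j, v j ^ 2 < R ^ 2 - w ^ 2} := by
          simp only [mem_setOf_eq]; have := hv; simp only [Sset, mem_setOf_eq] at this; linarith
        rw [Set.indicator_of_mem hv, Set.indicator_of_mem hv']
      · have hv' : v ∉ {v : Fin 2 → ℝ | ∑ j, v j ^ 2 < R ^ 2 - w ^ 2} := by
          simp only [mem_setOf_eq]; simp only [Sset, mem_setOf_eq] at hv; intro hcon
          exact hv (by linarith)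
        rw [Set.indicator_of_notMem hv, Set.indicator_of_notMem hv']
    rw [hrw]
    have hmeas2 : MeasurableSet {v : Fin 2 → ℝ | ∑ j, v j ^ 2 < R ^ 2 - w ^ 2} := by
      apply measurableSet_lt _ measurable_const
      fun_prop
    rw [integral_indicator_const _ hmeas2, measureReal_def, vol_disk]
    by_cases hw : w ∈ Ioo (-R) R
    · have hw2 : w ^ 2 < R ^ 2 := by
        rcases hw with ⟨h1, h2⟩
        nlinarith
      rw [Set.indicator_of_mem hw, ENNReal.toReal_ofReal (by nlinarith [Real.pi_pos])]
      rw [Complex.real_smul]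
    · have hw2 : R ^ 2 - w ^ 2 ≤ 0 := by
        simp only [mem_Ioo, not_and_or, not_lt] at hw
        rcases hw with h | h <;> nlinarith
      rw [Set.indicator_of_notMem hw, ENNReal.ofReal_of_nonpos (by nlinarith [Real.pi_pos]),
        ENNReal.toReal_zero, zero_smul]
  simp only [inner_eq]
  rw [integral_indicator measurableSet_Ioo, ← MeasureTheory.integral_Ioc_eq_integral_Ioo,
    ← intervalIntegral.integral_of_le (by linarith : -R ≤ R)]

def ξ : E := EuclideanSpace.single 0 1

lemma norm_ξ : ‖ξ‖ = 1 := by simp [ξ]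

lemma inner_ξ (u : E) : (inner ℝ ξ u : ℝ) = u 0 := by
  simp [ξ, EuclideanSpace.inner_single_left]

lemma exists_iso {x y : E} (h : ‖x‖ = ‖y‖) : ∃ T : E ≃ₗᵢ[ℝ] E, T x = y := by
  by_cases hxy : x = y
  · exact ⟨LinearIsometryEquiv.refl ℝ _, by simp [hxy]⟩
  · exact ⟨Submodule.reflection (ℝ ∙ (x - y))ᗮ, Submodule.reflection_sub h⟩

/-- Fourier-type integrals of an invariant measure depend only on the norm. -/
lemma integral_congr_norm (μ' : Measure E)
    (hinv : ∀ T : E ≃ₗᵢ[ℝ] E, Measure.map T μ' = μ') {x x' : E} (h : ‖x‖ = ‖x'‖) :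
    ∫ y, ee (inner ℝ x y : ℝ) ∂μ' = ∫ y, ee (inner ℝ x' y : ℝ) ∂μ' := by
  obtain ⟨T, hT⟩ := exists_iso h.symm   -- T x' = x
  have hmeas : AEStronglyMeasurable (fun y : E => ee (inner ℝ x y : ℝ)) (Measure.map T μ') :=
    (continuous_ee.comp (Continuous.inner continuous_const continuous_id)).aestronglyMeasurable
  calc ∫ y, ee (inner ℝ x y : ℝ) ∂μ'
      = ∫ y, ee (inner ℝ x y : ℝ) ∂(Measure.map T μ') := by rw [hinv]
    _ = ∫ y, ee (inner ℝ x (T y) : ℝ) ∂μ' := by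
        rw [integral_map T.continuous.measurable.aemeasurable hmeas]
    _ = ∫ y, ee (inner ℝ x' y : ℝ) ∂μ' := by
        congr 1; ext y
        rw [← hT, T.inner_map_map]

/-- The ball-restricted Lebesgue measure is invariant. -/
lemma ball_inv (R : ℝ) (T : E ≃ₗᵢ[ℝ] E) :
    Measure.map T (volume.restrict (ball (0 : E) R)) = volume.restrict (ball (0 : E) R) := by
  have h1 : T ⁻¹' ball (0 : E) R = ball 0 R := by
    ext z; simp [mem_ball, dist_eq_norm]
  conv_rhs => rw [← T.measurePreserving.map_eq]
  rw [Measure.restrict_map T.continuous.measurable measurableSet_ball, h1]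

instance ball_finite (R : ℝ) : IsFiniteMeasure (volume.restrict (ball (0 : E) R)) := by
  constructor
  rw [Measure.restrict_apply_univ]
  exact measure_ball_lt_top

/-- Rotating the Cartesian computation. -/
lemma ball_integral {r R : ℝ} (hr : 0 < r) (hR : 0 < R) (y : E) (hy : ‖y‖ = r) :
    ∫ u in ball (0 : E) R, ee (inner ℝ y u : ℝ) ∂volume
      = ∫ w in (-R)..R, (((Real.pi * (R^2 - w^2) : ℝ)) : ℂ) * ee (r * w) := by
  have hnorm : ‖y‖ = ‖r • ξ‖ := by
    rw [norm_smul, norm_ξ, Real.norm_eq_abs, abs_of_pos hr, mul_one, hy]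
  calc ∫ u in ball (0 : E) R, ee (inner ℝ y u : ℝ) ∂volume
      = ∫ u in ball (0 : E) R, ee (inner ℝ (r • ξ) u : ℝ) ∂volume :=
        integral_congr_norm (volume.restrict (ball (0 : E) R)) (ball_inv R) hnorm
    _ = ∫ u, Set.indicator (ball (0:E) R) (fun u => ee (r * u 0)) u ∂volume := by
        rw [← integral_indicator measurableSet_ball]
        congr 1
        simp only [real_inner_smul_left, inner_ξ]
    _ = _ := cartesian r R hR

lemma ball_vol : (volume (ball (0 : E) 1)).toReal = 4 * Real.pi / 3 := by
  rw [EuclideanSpace.volume_ball]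
  have hcard : Fintype.card (Fin 3) = 3 := by simp
  rw [hcard]
  have h32 : ((3:ℕ) : ℝ) / 2 + 1 = 3 / 2 + 1 := by norm_num
  have hg : Real.Gamma ((3:ℕ) / 2 + 1) = 3 / 4 * Real.sqrt Real.pi := by
    rw [h32, Real.Gamma_add_one (by norm_num)]
    rw [show (3/2 : ℝ) = 1/2 + 1 by norm_num, Real.Gamma_add_one (by norm_num)]
    rw [Real.Gamma_one_half_eq]
    ring
  rw [hg]
  have hs : Real.sqrt Real.pi > 0 := Real.sqrt_pos.2 Real.pi_pos
  have hval : Real.sqrt Real.pi ^ 3 / (3 / 4 * Real.sqrt Real.pi) = 4 * Real.pi / 3 := by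
    have h2 : Real.sqrt Real.pi ^ 3 = Real.pi * Real.sqrt Real.pi := by
      rw [pow_succ, Real.sq_sqrt Real.pi_pos.le]
    rw [h2]
    field_simp
  rw [hval, ENNReal.ofReal_one, one_pow, one_mul,
    ENNReal.toReal_ofReal (by positivity)]

def phi (μ : Measure E) (ρ : ℝ) : ℂ := ∫ y, ee (inner ℝ (ρ • ξ) y : ℝ) ∂μ

lemma key_identity {r : ℝ} (hr : 0 < r) (μ : Measure E) [IsProbabilityMeasure μ]
    (hsupp : μ (sphere (0 : E) r)ᶜ = 0)
    (hrot : ∀ T : E ≃ₗᵢ[ℝ] E, Measure.map T μ = μ)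
    {R : ℝ} (hR : 0 < R) :
    ((4 * Real.pi : ℝ) : ℂ) * (∫ ρ in (0:ℝ)..R, (ρ:ℂ)^2 * phi μ ρ)
      = ∫ w in (-R)..R, (((Real.pi * (R^2 - w^2) : ℝ)) : ℂ) * ee (r * w) := by
  have hF : ∀ u : E, (∫ y, ee (inner ℝ u y : ℝ) ∂μ) = phi μ ‖u‖ := by
    intro u
    apply integral_congr_norm μ hrot
    rw [norm_smul, norm_ξ, Real.norm_eq_abs, abs_norm, mul_one]
  -- radial formula for the LHS
  have lhs_eq : ∫ u in ball (0:E) R, (∫ y, ee (inner ℝ u y : ℝ) ∂μ) ∂volume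
      = ((4*Real.pi : ℝ) : ℂ) * (∫ ρ in (0:ℝ)..R, (ρ:ℂ)^2 * phi μ ρ) := by
    rw [← integral_indicator measurableSet_ball]
    have hpoint : ∀ u : E, Set.indicator (ball (0:E) R)
          (fun u => ∫ y, ee (inner ℝ u y : ℝ) ∂μ) u
        = Set.indicator (Iio R) (phi μ) ‖u‖ := by
      intro u
      by_cases hu : u ∈ ball (0:E) R
      · rw [Set.indicator_of_mem hu,
          Set.indicator_of_mem (by rwa [mem_ball_zero_iff] at hu : ‖u‖ ∈ Iio R), hF]
      · rw [Set.indicator_of_notMem hu,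
          Set.indicator_of_notMem (by rwa [mem_ball_zero_iff] at hu : ‖u‖ ∉ Iio R)]
    calc ∫ u, Set.indicator (ball (0:E) R) (fun u => ∫ y, ee (inner ℝ u y : ℝ) ∂μ) u ∂volume
        = ∫ u : E, Set.indicator (Iio R) (phi μ) ‖u‖ ∂volume := by
          simp only [hpoint]
      _ = (Module.finrank ℝ (EuclideanSpace ℝ (Fin 3)))
            • (volume (ball (0:E) 1)).toReal
            • ∫ ρ in Ioi (0:ℝ), ρ ^ (Module.finrank ℝ (EuclideanSpace ℝ (Fin 3)) - 1)
                • Set.indicator (Iio R) (phi μ) ρ :=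
          integral_fun_norm_addHaar volume _
      _ = ((4*Real.pi : ℝ) : ℂ) * (∫ ρ in (0:ℝ)..R, (ρ:ℂ)^2 * phi μ ρ) := by
          rw [finrank_euclideanSpace_fin, ball_vol]
          have hind : ∀ ρ : ℝ, ρ ^ (3 - 1) • Set.indicator (Iio R) (phi μ) ρ
              = Set.indicator (Iio R) (fun ρ => (ρ:ℂ)^2 * phi μ ρ) ρ := by
            intro ρ
            by_cases hρ : ρ ∈ Iio R
            · rw [Set.indicator_of_mem hρ, Set.indicator_of_mem hρ, Complex.real_smul]
              push_cast
              ring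
            · rw [Set.indicator_of_notMem hρ, Set.indicator_of_notMem hρ, smul_zero]
          simp only [hind]
          rw [setIntegral_indicator measurableSet_Iio, Ioi_inter_Iio,
            ← MeasureTheory.integral_Ioc_eq_integral_Ioo,
            ← intervalIntegral.integral_of_le hR.le]
          rw [← Nat.cast_smul_eq_nsmul ℝ, smul_smul, Complex.real_smul]
          push_cast
          ring
  -- Fubini for the LHS
  have hcont : Continuous fun p : (EuclideanSpace ℝ (Fin 3)) × (EuclideanSpace ℝ (Fin 3)) =>
      ee (inner ℝ p.1 p.2 : ℝ) := continuous_ee.comp continuous_inner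
  have hswap : ∫ u in ball (0:E) R, (∫ y, ee (inner ℝ u y : ℝ) ∂μ) ∂volume
      = ∫ y, (∫ u in ball (0:E) R, ee (inner ℝ u y : ℝ) ∂volume) ∂μ := by
    apply integral_integral_swap
    apply Integrable.mono' (integrable_const (1:ℝ))
    · exact hcont.aestronglyMeasurable
    · filter_upwards with p
      rw [Function.uncurry]
      rw [norm_ee]
  have hae : ∀ᵐ y ∂μ, ‖y‖ = r := by
    rw [ae_iff]
    apply measure_mono_null _ hsupp
    intro y hy
    simp only [mem_setOf_eq] at hy
    simp only [mem_compl_iff, mem_sphere_iff_norm, sub_zero]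
    exact hy
  have hconst : ∫ y, (∫ u in ball (0:E) R, ee (inner ℝ u y : ℝ) ∂volume) ∂μ
      = ∫ w in (-R)..R, (((Real.pi * (R^2 - w^2) : ℝ)) : ℂ) * ee (r * w) := by
    have : ∀ᵐ y ∂μ, (∫ u in ball (0:E) R, ee (inner ℝ u y : ℝ) ∂volume)
        = ∫ w in (-R)..R, (((Real.pi * (R^2 - w^2) : ℝ)) : ℂ) * ee (r * w) := by
      filter_upwards [hae] with y hy
      rw [← ball_integral hr hR y hy]
      congr 1
      funext u
      rw [real_inner_comm]
    rw [integral_congr_ae this, integral_const, probReal_univ, one_smul]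
  rw [← lhs_eq, hswap, hconst]

lemma oneD {r R : ℝ} (hr : 0 < r) :
    (∫ w in (-R)..R, (((Real.pi * (R^2 - w^2) : ℝ)) : ℂ) * ee (r * w))
      = ∫ ρ in (0:ℝ)..R, (((2 / r) * (ρ * Real.sin (2 * Real.pi * r * ρ)) : ℝ) : ℂ) := by
  set a := 2 * Real.pi * r with ha_def
  have hapos : 0 < a := by positivity
  have ha : a ≠ 0 := hapos.ne'
  -- pointwise decomposition of the complex integrand
  have hsplit : ∀ w : ℝ, (((Real.pi * (R^2 - w^2) : ℝ)) : ℂ) * ee (r * w)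
      = (((Real.pi * (R^2 - w^2)) * Real.cos (a * w) : ℝ) : ℂ)
        + ((-(Real.pi * (R^2 - w^2)) * Real.sin (a * w) : ℝ) : ℂ) * Complex.I := by
    intro w
    rw [ee]
    have harg : (-(2 * (Real.pi : ℂ) * Complex.I * ((r * w : ℝ) : ℂ))) = ((-(a * w) : ℝ) : ℂ) * Complex.I := by
      push_cast [ha_def]; ring
    rw [harg, Complex.exp_mul_I, ← Complex.ofReal_cos, ← Complex.ofReal_sin,
      Real.cos_neg, Real.sin_neg]
    push_cast
    ring
  simp only [hsplit]
  -- integrability of the two pieces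
  have hc1 : Continuous fun w : ℝ => (Real.pi * (R^2 - w^2)) * Real.cos (a * w) := by fun_prop
  have hc2 : Continuous fun w : ℝ => -(Real.pi * (R^2 - w^2)) * Real.sin (a * w) := by fun_prop
  have hI1 : IntervalIntegrable
      (fun w : ℝ => ((Real.pi * (R ^ 2 - w ^ 2) * Real.cos (a * w) : ℝ) : ℂ)) volume (-R) R :=
    Continuous.intervalIntegrable (by fun_prop) _ _
  have hI2 : IntervalIntegrable
      (fun w : ℝ => ((-(Real.pi * (R ^ 2 - w ^ 2)) * Real.sin (a * w) : ℝ) : ℂ) * Complex.I)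
      volume (-R) R :=
    Continuous.intervalIntegrable (by fun_prop) _ _
  rw [intervalIntegral.integral_add hI1 hI2,
    intervalIntegral.integral_mul_const, intervalIntegral.integral_ofReal,
    intervalIntegral.integral_ofReal, intervalIntegral.integral_ofReal]
  -- first real integral
  have hid : ∀ w : ℝ, HasDerivAt (fun w : ℝ => a * w) a w := by
    intro w; simpa using (hasDerivAt_id w).const_mul a
  have hsin : ∀ w : ℝ, HasDerivAt (fun w => Real.sin (a * w)) (Real.cos (a * w) * a) w :=
    fun w => (Real.hasDerivAt_sin (a * w)).comp w (hid w)
  have hcos : ∀ w : ℝ, HasDerivAt (fun w => Real.cos (a * w)) (-Real.sin (a * w) * a) w :=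
    fun w => (Real.hasDerivAt_cos (a * w)).comp w (hid w)
  have hpoly : ∀ w : ℝ, HasDerivAt (fun w : ℝ => R ^ 2 - w ^ 2) (-(2 * w)) w := by
    intro w
    simpa using (hasDerivAt_pow 2 w).const_sub (R ^ 2)
  have hG1 : ∀ w : ℝ, HasDerivAt
      (fun w => Real.pi * ((R^2 - w^2) * Real.sin (a*w) / a - 2*w*Real.cos (a*w) / a^2
        + 2*Real.sin (a*w) / a^3))
      ((Real.pi * (R^2 - w^2)) * Real.cos (a * w)) w := by
    intro w
    have t1 := ((hpoly w).mul (hsin w)).div_const a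
    have t2 := (((hasDerivAt_id w).const_mul 2).mul (hcos w)).div_const (a^2)
    have t3 := ((hsin w).const_mul 2).div_const (a^3)
    have := ((t1.sub t2).add t3).const_mul Real.pi
    refine this.congr_deriv ?_
    simp only [id_eq]
    field_simp
    ring
  have hG2 : ∀ w : ℝ, HasDerivAt
      (fun w => Real.pi * ((R^2 - w^2) * Real.cos (a*w) / a + 2*w*Real.sin (a*w) / a^2
        + 2*Real.cos (a*w) / a^3))
      (-(Real.pi * (R^2 - w^2)) * Real.sin (a * w)) w := by
    intro w
    have t1 := ((hpoly w).mul (hcos w)).div_const a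
    have t2 := (((hasDerivAt_id w).const_mul 2).mul (hsin w)).div_const (a^2)
    have t3 := ((hcos w).const_mul 2).div_const (a^3)
    have := ((t1.add t2).add t3).const_mul Real.pi
    refine this.congr_deriv ?_
    simp only [id_eq]
    field_simp
    ring
  have hB : ∀ ρ : ℝ, HasDerivAt
      (fun ρ => (2 / r) * ((Real.sin (a*ρ) - a*ρ*Real.cos (a*ρ)) / a^2))
      ((2 / r) * (ρ * Real.sin (a * ρ))) ρ := by
    intro ρ
    have t1 := ((hsin ρ).sub ((((hasDerivAt_id ρ).const_mul a)).mul (hcos ρ))).div_const (a^2)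
    have := t1.const_mul (2 / r)
    refine this.congr_deriv ?_
    simp only [id_eq]
    field_simp
    ring
  rw [intervalIntegral.integral_eq_sub_of_hasDerivAt (fun w _ => hG1 w)
      (hc1.intervalIntegrable _ _),
    intervalIntegral.integral_eq_sub_of_hasDerivAt (fun w _ => hG2 w)
      (hc2.intervalIntegrable _ _),
    intervalIntegral.integral_eq_sub_of_hasDerivAt (fun ρ _ => hB ρ)
      ((by fun_prop : Continuous fun ρ : ℝ => (2 / r) * (ρ * Real.sin (a * ρ))).intervalIntegrable _ _)]
  have hval2 : Real.pi * ((R^2 - R^2) * Real.cos (a*R) / a + 2*R*Real.sin (a*R) / a^2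
        + 2*Real.cos (a*R) / a^3)
      - Real.pi * ((R^2 - (-R)^2) * Real.cos (a*(-R)) / a + 2*(-R)*Real.sin (a*(-R)) / a^2
        + 2*Real.cos (a*(-R)) / a^3) = 0 := by
    rw [mul_neg, Real.sin_neg, Real.cos_neg]
    ring
  rw [hval2]
  rw [Complex.ofReal_zero, zero_mul, add_zero, Complex.ofReal_inj]
  rw [mul_zero, Real.sin_zero, Real.cos_zero]
  have hπ : Real.pi ≠ 0 := Real.pi_ne_zero
  rw [ha_def]
  field_simp
  rw [Real.cos_neg, Real.sin_neg]
  ring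

lemma phi_cont (μ : Measure E) [IsProbabilityMeasure μ] : Continuous (phi μ) := by
  have heq : phi μ = fun ρ => ∫ y, ee (ρ * (inner ℝ ξ y : ℝ)) ∂μ := by
    funext ρ
    unfold phi
    congr 1
    funext y
    rw [real_inner_smul_left]
  rw [heq]
  apply continuous_of_dominated (bound := fun _ => (1:ℝ))
  · intro ρ
    exact (continuous_ee.comp
      (continuous_const.mul (Continuous.inner continuous_const continuous_id))).aestronglyMeasurable
  · intro ρ
    filter_upwards with y
    rw [norm_ee]
  · exact integrable_const 1
  · filter_upwards with y
    exact continuous_ee.comp (continuous_id.mul continuous_const)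

lemma phi_value {r : ℝ} (hr : 0 < r) (μ : Measure E) [IsProbabilityMeasure μ]
    (hsupp : μ (sphere (0 : E) r)ᶜ = 0)
    (hrot : ∀ T : E ≃ₗᵢ[ℝ] E, Measure.map T μ = μ)
    {s : ℝ} (hs : 0 < s) :
    phi μ s = ((Real.sin (2 * Real.pi * r * s) / (2 * Real.pi * r * s) : ℝ) : ℂ) := by
  set F₁ : ℝ → ℂ := fun R => ((4 * Real.pi : ℝ) : ℂ) * ∫ ρ in (0:ℝ)..R, (ρ:ℂ)^2 * phi μ ρ
    with hF₁def
  set F₂ : ℝ → ℂ := fun R => ∫ ρ in (0:ℝ)..R,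
      (((2 / r) * (ρ * Real.sin (2 * Real.pi * r * ρ)) : ℝ) : ℂ) with hF₂def
  have hEq : ∀ R ∈ Ioi (0:ℝ), F₁ R = F₂ R := by
    intro R hR
    rw [hF₁def, hF₂def]
    exact (key_identity hr μ hsupp hrot hR).trans (oneD hr)
  have hc1 : Continuous fun ρ : ℝ => (ρ:ℂ)^2 * phi μ ρ := by
    exact (Continuous.pow (Complex.continuous_ofReal) 2).mul (phi_cont μ)
  have hc2 : Continuous fun ρ : ℝ => (((2 / r) * (ρ * Real.sin (2 * Real.pi * r * ρ)) : ℝ) : ℂ) := by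
    fun_prop
  have hd1 : HasDerivAt F₁ (((4 * Real.pi : ℝ) : ℂ) * ((s:ℂ)^2 * phi μ s)) s := by
    apply HasDerivAt.const_mul
    exact intervalIntegral.integral_hasDerivAt_right (hc1.intervalIntegrable _ _)
      (hc1.stronglyMeasurableAtFilter _ _) hc1.continuousAt
  have hd2 : HasDerivAt F₂ (((2 / r) * (s * Real.sin (2 * Real.pi * r * s)) : ℝ) : ℂ) s := by
    exact intervalIntegral.integral_hasDerivAt_right (hc2.intervalIntegrable _ _)
      (hc2.stronglyMeasurableAtFilter _ _) hc2.continuousAt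
  have hfeq : F₁ =ᶠ[𝓝 s] F₂ := by
    filter_upwards [isOpen_Ioi.mem_nhds hs] with R hR
    exact hEq R hR
  have huniq : ((4 * Real.pi : ℝ) : ℂ) * ((s:ℂ)^2 * phi μ s)
      = (((2 / r) * (s * Real.sin (2 * Real.pi * r * s)) : ℝ) : ℂ) :=
    (hd1.congr_of_eventuallyEq hfeq.symm).unique hd2
  have hne : ((4 * Real.pi : ℝ) : ℂ) * (s:ℂ)^2 ≠ 0 := by
    have h0 : (4 * Real.pi : ℝ) * s^2 ≠ 0 := by positivity
    intro hc
    apply h0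
    exact_mod_cast hc
  have hrhs : (((2 / r) * (s * Real.sin (2 * Real.pi * r * s)) : ℝ) : ℂ)
      = ((4 * Real.pi : ℝ) : ℂ) * (s:ℂ)^2
        * ((Real.sin (2 * Real.pi * r * s) / (2 * Real.pi * r * s) : ℝ) : ℂ) := by
    push_cast
    have hrc : (r:ℂ) ≠ 0 := Complex.ofReal_ne_zero.2 hr.ne'
    have hsc : (s:ℂ) ≠ 0 := Complex.ofReal_ne_zero.2 hs.ne'
    have hπc : ((Real.pi:ℝ):ℂ) ≠ 0 := Complex.ofReal_ne_zero.2 Real.pi_ne_zero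
    field_simp
    ring
  have h1 : ((4 * Real.pi : ℝ) : ℂ) * (s:ℂ)^2 * phi μ s
      = ((4 * Real.pi : ℝ) : ℂ) * (s:ℂ)^2
        * ((Real.sin (2 * Real.pi * r * s) / (2 * Real.pi * r * s) : ℝ) : ℂ) := by
    rw [mul_assoc, huniq, hrhs]
  exact mul_left_cancel₀ hne h1

end

end SFP

/-- The Fourier transform of the uniform (rotation-invariant) probability measure on the
sphere of radius `r` in `ℝ³` equals `sin(2πr‖x‖)/(2πr‖x‖)` for every `x ≠ 0`. -/
theorem fourierTransform_uniform_sphere_measure_dim_three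
    (r : ℝ) (hr : 0 < r)
    (μ : Measure (EuclideanSpace ℝ (Fin 3))) [IsProbabilityMeasure μ]
    (hsupp : μ (Metric.sphere (0 : EuclideanSpace ℝ (Fin 3)) r)ᶜ = 0)
    (hrot : ∀ T : EuclideanSpace ℝ (Fin 3) ≃ₗᵢ[ℝ] EuclideanSpace ℝ (Fin 3),
      Measure.map T μ = μ) :
    ∀ x : EuclideanSpace ℝ (Fin 3), x ≠ 0 →
      ∫ y, Complex.exp (-(2 * Real.pi * Complex.I * ((inner ℝ x y : ℝ)))) ∂μ =
        ((Real.sin (2 * Real.pi * r * ‖x‖) / (2 * Real.pi * r * ‖x‖) : ℝ) : ℂ) := by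
  intro x hx
  have hs : 0 < ‖x‖ := norm_pos_iff.2 hx
  have h1 : ∫ y, Complex.exp (-(2 * Real.pi * Complex.I * ((inner ℝ x y : ℝ)))) ∂μ
      = ∫ y, SFP.ee (inner ℝ x y : ℝ) ∂μ := rfl
  rw [h1]
  have h2 : ∫ y, SFP.ee (inner ℝ x y : ℝ) ∂μ = SFP.phi μ ‖x‖ := by
    apply SFP.integral_congr_norm μ hrot
    rw [norm_smul, SFP.norm_ξ, Real.norm_eq_abs, abs_norm, mul_one]
  rw [h2]
  exact SFP.phi_value hr μ hsupp hrot hs
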